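/- The second marginal of a joint quantum state is obtained by state transformation along the extracted channel: Let τ be a quantum state on ℂ^n ⊗ ℂ^m (a positive semidefinite trace-1 matrix indexed by Fin n × Fin m) such that proj(τ) is positive definite. Then M₂(τ) = extr(τ) ≫ proj(τ), i.e. for all k, ℓ ∈ Fin m: ∑_i τ (i,k) (i,ℓ) = tr(extr(τ) ℓ k * proj(τ)). -/

import Mathlib

open Matrix
open scoped ComplexOrder

noncomputable section

/-- The square root of a positive semidefinite matrix, as defined in the older Mathlib. -/
def Matrix.PosSemidef.sqrt {n : Type*} [Fintype n] [DecidableEq n] {𝕜 : Type*} [RCLike 𝕜]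
    {A : Matrix n n 𝕜} (hA : A.PosSemidef) : Matrix n n 𝕜 :=
  (hA.1.eigenvectorUnitary : Matrix n n 𝕜) * diagonal ((↑) ∘ (√·) ∘ hA.1.eigenvalues) *
    (star (hA.1.eigenvectorUnitary : Matrix n n 𝕜))

/-- Transpose of the first marginal of a joint quantum state. -/
def qproj {n m : ℕ} (τ : Matrix (Fin n × Fin m) (Fin n × Fin m) ℂ) :
    Matrix (Fin n) (Fin n) ℂ :=
  Matrix.of fun i j => ∑ k, τ (j, k) (i, k)

/-- Channel extracted from a joint quantum state. -/
def qextr {n m : ℕ} (τ : Matrix (Fin n × Fin m) (Fin n × Fin m) ℂ)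
    (h : (qproj τ).PosDef) : Fin m → Fin m → Matrix (Fin n) (Fin n) ℂ :=
  fun k ℓ => ∑ i, ∑ j, (starRingEnd ℂ) (τ (i, k) (j, ℓ))
    • ((h.posSemidef.sqrt)⁻¹ * Matrix.single i j 1 * (h.posSemidef.sqrt)⁻¹)

/-- The second marginal of a joint quantum state is obtained by state
transformation along the extracted channel: `M₂(τ) = extr(τ) ≫ proj(τ)`. -/
theorem second_marginal_extr {n m : ℕ}
    (τ : Matrix (Fin n × Fin m) (Fin n × Fin m) ℂ)
    (hτ : τ.PosSemidef) (hτtr : τ.trace = 1)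
    (hproj : (qproj τ).PosDef) :
    ∀ k ℓ : Fin m, (∑ i, τ (i, k) (i, ℓ)) = (qextr τ hproj ℓ k * qproj τ).trace := by
  intro k ℓ
  set S := hproj.posSemidef.sqrt with hS
  have h2 : S * S = qproj τ := by
    have hA := hproj.posSemidef
    have hU : (star (hA.1.eigenvectorUnitary : Matrix (Fin n) (Fin n) ℂ)) *
        (hA.1.eigenvectorUnitary : Matrix (Fin n) (Fin n) ℂ) = 1 := by simp
    conv_rhs => rw [hA.1.spectral_theorem, Unitary.conjStarAlgAut_apply]
    rw [hS, Matrix.PosSemidef.sqrt]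
    calc _ = (hA.1.eigenvectorUnitary : Matrix (Fin n) (Fin n) ℂ) *
          (diagonal ((↑) ∘ (√·) ∘ hA.1.eigenvalues) *
            ((star (hA.1.eigenvectorUnitary : Matrix (Fin n) (Fin n) ℂ)) *
              (hA.1.eigenvectorUnitary : Matrix (Fin n) (Fin n) ℂ)) *
            diagonal ((↑) ∘ (√·) ∘ hA.1.eigenvalues)) *
          (star (hA.1.eigenvectorUnitary : Matrix (Fin n) (Fin n) ℂ)) := by
          simp only [Matrix.mul_assoc]; rfl
      _ = _ := by
          rw [hU, Matrix.mul_one, diagonal_mul_diagonal]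
          congr 3
          funext i
          simp only [Function.comp_apply]
          norm_cast
          exact congrArg _ (Real.mul_self_sqrt (hA.eigenvalues_nonneg i))
  have hdet : IsUnit S.det := by
    have hm : S.det * S.det = (qproj τ).det := by rw [← Matrix.det_mul, h2]
    have hP : (qproj τ).det ≠ 0 := ne_of_gt hproj.det_pos
    have : S.det ≠ 0 := by
      intro h0; rw [h0, mul_zero] at hm; exact hP hm.symm
    exact isUnit_iff_ne_zero.mpr this
  have key : ∀ i j : Fin n,
      (S⁻¹ * Matrix.single i j 1 * S⁻¹ * qproj τ).trace
        = if i = j then 1 else 0 := by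
    intro i j
    have : S⁻¹ * Matrix.single i j 1 * S⁻¹ * qproj τ
        = S⁻¹ * (Matrix.single i j 1 * S) := by
      rw [← h2]
      calc S⁻¹ * Matrix.single i j 1 * S⁻¹ * (S * S)
          = S⁻¹ * Matrix.single i j 1 * (S⁻¹ * S) * S := by
            noncomm_ring
        _ = S⁻¹ * (Matrix.single i j 1 * S) := by
            rw [Matrix.nonsing_inv_mul S hdet]; noncomm_ring
    rw [this, Matrix.trace_mul_comm, Matrix.mul_assoc,
      Matrix.mul_nonsing_inv S hdet, Matrix.mul_one]
    rcases eq_or_ne i j with rfl | hij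
    · simp
    · rw [if_neg hij]
      exact Matrix.trace_single_eq_of_ne i j (1:ℂ) hij
  have expand : qextr τ hproj ℓ k * qproj τ
      = ∑ i, ∑ j, (starRingEnd ℂ) (τ (i, ℓ) (j, k))
          • (S⁻¹ * Matrix.single i j 1 * S⁻¹ * qproj τ) := by
    simp [qextr, Finset.sum_mul, Matrix.smul_mul, hS]
  rw [expand]
  simp only [Matrix.trace_sum, Matrix.trace_smul, key, smul_eq_mul, mul_ite, mul_one, mul_zero]
  simp only [Finset.sum_ite_eq, Finset.mem_univ, if_true]
  refine Finset.sum_congr rfl fun i _ => ?_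
  have := hτ.isHermitian.apply (i, ℓ) (i, k)
  rw [← this]
  simp
end
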